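/- Let A = {2ⁿ + n : n ∈ ℕ} ⊆ ℤ. Then Σ_3(±A) = ℤ; that is, every integer is a sum of at most three elements of ±A = {x ∈ ℤ : |x| ∈ A}. In particular, A is not sufficiently sparse. -/
import Mathlib


open Filter Pointwise

/-- The `k`-fold sumset `X + ⋯ + X` (`k` times) of a set of integers. -/
def kFold (X : Set ℤ) (k : ℕ) : Set ℤ :=
  {z : ℤ | ∃ f : Fin k → ℤ, (∀ i, f i ∈ X) ∧ z = ∑ i, f i}

/-- `Σ_n(X) = ⋃_{k=1}^n k(X)`. -/
def sigmaSum (n : ℕ) (X : Set ℤ) : Set ℤ :=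
  ⋃ k ∈ Finset.Icc 1 n, kFold X k

/-- `±A = {x ∈ ℤ : |x| ∈ A}`. -/
def pmSet (A : Set ℤ) : Set ℤ := {x : ℤ | |x| ∈ A}

/-- The lower asymptotic density of a set of naturals:
`liminf_{n → ∞} |A ∩ {1,…,n}| / n`. -/
noncomputable def lowerDensity (A : Set ℕ) : ℝ :=
  Filter.liminf (fun n : ℕ => (Set.ncard (A ∩ Set.Icc 1 n) : ℝ) / n) Filter.atTop

/-- The set of naturals whose image in `ℤ` lies in `S`. -/
def intSetToNat (S : Set ℤ) : Set ℕ := {n : ℕ | (n : ℤ) ∈ S}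

/-- `A ⊆ ℤ` is sufficiently sparse if `δ̲(Σ_n(±A) ∩ ℕ) = 0` for all `n ≥ 1`. -/
def SuffSparse (A : Set ℤ) : Prop :=
  ∀ n : ℕ, 1 ≤ n → lowerDensity (intSetToNat (sigmaSum n (pmSet A))) = 0

/-- A set `S` of (positive) reals is geometric if `{s/t : s, t ∈ S, t ≤ s}` is a closed
and discrete subset of `ℝ`. -/
def IsGeometric (S : Set ℝ) : Prop :=
  IsClosed {x : ℝ | ∃ s ∈ S, ∃ t ∈ S, t ≤ s ∧ x = s / t} ∧
    DiscreteTopology {x : ℝ | ∃ s ∈ S, ∃ t ∈ S, t ≤ s ∧ x = s / t}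

/-- `A ⊆ ℤ` is geometrically sparse if there is `f : A → ℝ⁺` with `f(A)` geometric and
`sup_{a ∈ A} |a − f(a)| < ∞`. -/
def GeomSparse (A : Set ℤ) : Prop :=
  ∃ f : ℤ → ℝ, (∀ a ∈ A, 0 < f a) ∧ IsGeometric (f '' A) ∧
    ∃ C : ℝ, ∀ a ∈ A, |(a : ℝ) - f a| ≤ C

lemma mem_pmA (n : ℕ) : (2 ^ n + n : ℤ) ∈ pmSet {x : ℤ | ∃ n : ℕ, x = 2 ^ n + n} := by
  simp only [pmSet, Set.mem_setOf_eq]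
  rw [abs_of_nonneg (by positivity)]
  exact ⟨n, rfl⟩

lemma mem_pmA' (n : ℕ) : (-(2 ^ n + n) : ℤ) ∈ pmSet {x : ℤ | ∃ n : ℕ, x = 2 ^ n + n} := by
  simp only [pmSet, Set.mem_setOf_eq, abs_neg]
  rw [abs_of_nonneg (by positivity)]
  exact ⟨n, rfl⟩

lemma all_in_3 (m : ℤ) : m ∈ kFold (pmSet {x : ℤ | ∃ n : ℕ, x = 2 ^ n + n}) 3 := by
  rcases le_or_gt m 1 with h | h
  · set n : ℕ := (1 - m).toNat with hn
    have hnz : (n : ℤ) = 1 - m := Int.toNat_of_nonneg (by omega)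
    refine ⟨![2 ^ (n+1) + (n+1), -(2 ^ n + n), -(2 ^ n + n)], ?_, ?_⟩
    · intro i; fin_cases i
      · exact mem_pmA (n+1)
      · exact mem_pmA' n
      · exact mem_pmA' n
    · rw [Fin.sum_univ_three]
      simp only [Matrix.cons_val_zero, Matrix.cons_val_one, Matrix.head_cons,
        Matrix.cons_val_two, Matrix.tail_cons]
      have : (2:ℤ) ^ (n+1) = 2 * 2 ^ n := by ring
      omega
  · set n : ℕ := (m + 1).toNat with hn
    have hnz : (n : ℤ) = m + 1 := Int.toNat_of_nonneg (by omega)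
    refine ⟨![-(2 ^ (n+1) + (n+1)), 2 ^ n + n, 2 ^ n + n], ?_, ?_⟩
    · intro i; fin_cases i
      · exact mem_pmA' (n+1)
      · exact mem_pmA n
      · exact mem_pmA n
    · rw [Fin.sum_univ_three]
      simp only [Matrix.cons_val_zero, Matrix.cons_val_one, Matrix.head_cons,
        Matrix.cons_val_two, Matrix.tail_cons]
      have : (2:ℤ) ^ (n+1) = 2 * 2 ^ n := by ring
      omega

lemma lowerDensity_univ : lowerDensity (Set.univ : Set ℕ) = 1 := by
  have h : Tendsto (fun n : ℕ => (Set.ncard ((Set.univ : Set ℕ) ∩ Set.Icc 1 n) : ℝ) / n)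
      atTop (nhds 1) := by
    apply Tendsto.congr' (f₁ := fun _ => (1:ℝ))
    · filter_upwards [eventually_ge_atTop 1] with n hn
      rw [Set.univ_inter, ← Finset.coe_Icc, Set.ncard_coe_finset, Nat.card_Icc]
      rw [eq_comm, div_eq_one_iff_eq (by positivity)]
      push_cast
      ring
    · exact tendsto_const_nhds
  exact h.liminf_eq

lemma intSetToNat_univ : intSetToNat Set.univ = Set.univ := by
  ext n; simp [intSetToNat]

/-- For `A = {2ⁿ + n : n ∈ ℕ}`, we have `Σ_3(±A) = ℤ`, so every integer is a
sum of at most three elements of `±A`; in particular `A` is not sufficiently sparse. -/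
theorem sigma_three_pm_pow_add_eq_univ :
    sigmaSum 3 (pmSet {x : ℤ | ∃ n : ℕ, x = 2 ^ n + n}) = Set.univ ∧
      ¬ SuffSparse {x : ℤ | ∃ n : ℕ, x = 2 ^ n + n} := by
  have huniv : sigmaSum 3 (pmSet {x : ℤ | ∃ n : ℕ, x = 2 ^ n + n}) = Set.univ := by
    ext m
    simp only [Set.mem_univ, iff_true, sigmaSum, Set.mem_iUnion]
    exact ⟨3, by simp, all_in_3 m⟩
  refine ⟨huniv, fun hs => ?_⟩
  have h3 := hs 3 (by norm_num)
  rw [huniv, intSetToNat_univ, lowerDensity_univ] at h3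
  norm_num at h3
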